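/- Let t₀ > 0 and c > 0, and let A, Φ : [0, t₀) → M_n(ℂ) be continuous with A(t)† = −A(t), Φ(t)† = −Φ(t), and operator norm ‖Φ(t)‖ ≤ c/(t₀ − t) for all t ∈ [0, t₀). If g : [0, t₀) → M_n(ℂ) is differentiable and satisfies g′(t) = (−A(t) + iΦ(t)) g(t), then for all t ∈ [0, t₀), ‖g(t)‖_F ≤ ‖g(0)‖_F · (t₀/(t₀ − t))^c. -/

import Mathlib

open Matrix
set_option synthInstance.maxHeartbeats 1000000
set_option maxHeartbeats 1000000

attribute [local instance] Matrix.normedAddCommGroup Matrix.normedSpace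

/-- The Frobenius norm `‖X‖_F = √(tr (X Xᴴ))` of a complex matrix. -/
noncomputable def frobeniusNorm' {n : ℕ} (X : Matrix (Fin n) (Fin n) ℂ) : ℝ :=
  Real.sqrt (Matrix.trace (X * Xᴴ)).re

/-- The operator norm of a complex matrix acting on Euclidean space `ℂⁿ`. -/
noncomputable def opNorm' {n : ℕ} (X : Matrix (Fin n) (Fin n) ℂ) : ℝ :=
  ‖Matrix.toEuclideanCLM (𝕜 := ℂ) X‖

lemma trace_re_eq_sum {n : ℕ} (X Y : Matrix (Fin n) (Fin n) ℂ) :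
    (Matrix.trace (Xᴴ * Y)).re = ∑ p : Fin n × Fin n,
      ((starRingEnd ℂ) (X p.1 p.2) * Y p.1 p.2).re := by
  rw [Matrix.trace, Fintype.sum_prod_type]
  simp only [Matrix.diag, Matrix.mul_apply, Matrix.conjTranspose_apply]
  rw [Finset.sum_comm, Complex.re_sum]
  congr 1; ext j
  rw [Complex.re_sum]
  rfl

lemma trace_skew_re_zero {n : ℕ} (X A : Matrix (Fin n) (Fin n) ℂ)
    (hA : Aᴴ = -A) : (Matrix.trace (Xᴴ * (A * X))).re = 0 := by
  have h : (starRingEnd ℂ) (Matrix.trace (Xᴴ * (A * X))) = -Matrix.trace (Xᴴ * (A * X)) := by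
    rw [starRingEnd_apply, ← Matrix.trace_conjTranspose]
    simp only [Matrix.conjTranspose_mul, Matrix.conjTranspose_conjTranspose, hA]
    simp [Matrix.mul_assoc, Matrix.mul_neg, Matrix.neg_mul, Matrix.trace_neg]
  have := congrArg Complex.re h
  simp only [Complex.conj_re, Complex.neg_re] at this
  linarith

lemma trace_bound {n : ℕ} (X M : Matrix (Fin n) (Fin n) ℂ) :
    (Matrix.trace (Xᴴ * (M * X))).re ≤ opNorm' M * (Matrix.trace (Xᴴ * X)).re := by
  classical
  set T := Matrix.toEuclideanCLM (𝕜 := ℂ) M with hT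
  set v : Fin n → EuclideanSpace ℂ (Fin n) := fun j => (WithLp.equiv 2 _).symm (fun i => X i j)
  have h1 : (Matrix.trace (Xᴴ * (M * X))) = ∑ j, inner ℂ (v j) (T (v j)) := by
    rw [Matrix.trace]
    apply Finset.sum_congr rfl; intro j _
    simp only [Matrix.diag, Matrix.mul_apply, Matrix.conjTranspose_apply]
    rw [PiLp.inner_apply]
    simp only [v, hT, WithLp.equiv_symm_apply, Matrix.toEuclideanCLM_toLp, PiLp.toLp_apply,
      Matrix.mulVec, dotProduct, RCLike.inner_apply]
    apply Finset.sum_congr rfl; intro i _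
    rw [mul_comm]; rfl
  have h2 : (Matrix.trace (Xᴴ * X)) = ∑ j, inner ℂ (v j) (v j) := by
    rw [Matrix.trace]
    apply Finset.sum_congr rfl; intro j _
    simp only [Matrix.diag, Matrix.mul_apply, Matrix.conjTranspose_apply]
    rw [PiLp.inner_apply]
    simp [v, RCLike.inner_apply, Complex.conj_mul']
  rw [h1, h2, Complex.re_sum, Complex.re_sum, Finset.mul_sum]
  apply Finset.sum_le_sum
  intro j _
  have hinner : (inner ℂ (v j) (v j) : ℂ).re = ‖v j‖ ^ 2 :=
    inner_self_eq_norm_sq (𝕜 := ℂ) (v j)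
  rw [hinner]
  calc (inner ℂ (v j) (T (v j)) : ℂ).re ≤ ‖(inner ℂ (v j) (T (v j)) : ℂ)‖ := Complex.re_le_norm _
    _ ≤ ‖v j‖ * ‖T (v j)‖ := norm_inner_le_norm _ _
    _ ≤ ‖v j‖ * (‖T‖ * ‖v j‖) := by
        gcongr; exact T.le_opNorm _
    _ = opNorm' M * ‖v j‖ ^ 2 := by rw [opNorm', ← hT]; ring

/-- entry evaluation as a continuous ℝ-linear map -/
noncomputable def entryCLM {n : ℕ} (i j : Fin n) :
    Matrix (Fin n) (Fin n) ℂ →L[ℝ] ℂ :=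
  LinearMap.toContinuousLinearMap
    { toFun := fun X => X i j
      map_add' := fun _ _ => rfl
      map_smul' := fun _ _ => rfl }

lemma hasDerivWithinAt_entry {n : ℕ} {g : ℝ → Matrix (Fin n) (Fin n) ℂ}
    {g' : Matrix (Fin n) (Fin n) ℂ} {s : Set ℝ} {t : ℝ}
    (h : HasDerivWithinAt g g' s t) (i j : Fin n) :
    HasDerivWithinAt (fun u => g u i j) (g' i j) s t :=
  ((entryCLM i j).hasFDerivAt.comp_hasDerivWithinAt t h :)

lemma hasDerivWithinAt_normSq {f : ℝ → ℂ} {d : ℂ} {s : Set ℝ} {t : ℝ}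
    (h : HasDerivWithinAt f d s t) :
    HasDerivWithinAt (fun u => ((starRingEnd ℂ) (f u) * f u).re)
      (2 * ((starRingEnd ℂ) (f t) * d).re) s t := by
  have hre : HasDerivWithinAt (fun u => (f u).re) d.re s t :=
    (Complex.reCLM.hasFDerivAt.comp_hasDerivWithinAt t h :)
  have him : HasDerivWithinAt (fun u => (f u).im) d.im s t :=
    (Complex.imCLM.hasFDerivAt.comp_hasDerivWithinAt t h :)
  have := (hre.mul hre).add (him.mul him)
  convert this using 1
  · rfl
  · rfl
  · funext u
    simp [Complex.mul_re]
  · simp [Complex.mul_re]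
    ring

lemma hasDerivWithinAt_traceN {n : ℕ} {g : ℝ → Matrix (Fin n) (Fin n) ℂ}
    {g' : Matrix (Fin n) (Fin n) ℂ} {s : Set ℝ} {t : ℝ}
    (h : HasDerivWithinAt g g' s t) :
    HasDerivWithinAt (fun u => (Matrix.trace ((g u)ᴴ * g u)).re)
      (2 * (Matrix.trace ((g t)ᴴ * g')).re) s t := by
  have key : ∀ p : Fin n × Fin n, HasDerivWithinAt
      (fun u => ((starRingEnd ℂ) (g u p.1 p.2) * g u p.1 p.2).re)
      (2 * ((starRingEnd ℂ) (g t p.1 p.2) * g' p.1 p.2).re) s t := fun p =>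
    hasDerivWithinAt_normSq (hasDerivWithinAt_entry h p.1 p.2)
  have hsum := HasDerivWithinAt.fun_sum (u := (Finset.univ : Finset (Fin n × Fin n)))
    (fun p _ => key p)
  convert hsum using 1
  · rfl
  · rfl
  · funext u
    rw [trace_re_eq_sum]
  · rw [trace_re_eq_sum, Finset.mul_sum]

lemma traceN_nonneg {n : ℕ} (X : Matrix (Fin n) (Fin n) ℂ) :
    0 ≤ (Matrix.trace (Xᴴ * X)).re := by
  rw [trace_re_eq_sum]
  apply Finset.sum_nonneg
  intro p _
  have : ((starRingEnd ℂ) (X p.1 p.2) * X p.1 p.2).re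
      = (X p.1 p.2).re ^ 2 + (X p.1 p.2).im ^ 2 := by
    simp [Complex.mul_re]; ring
  rw [this]; positivity

/-- Algebraic growth of solutions of the scattering equation near the singularity: if
`A, Φ : [0, t₀) → Mₙ(ℂ)` are continuous with skew-Hermitian values, `‖Φ(t)‖ ≤ c/(t₀ - t)`,
and `g' = (-A + iΦ) g`, then `‖g(t)‖_F ≤ ‖g(0)‖_F · (t₀/(t₀ - t))^c`. -/
theorem stmt4 (n : ℕ) (t₀ c : ℝ) (ht₀ : 0 < t₀) (hc : 0 < c)
    (A Φ g : ℝ → Matrix (Fin n) (Fin n) ℂ)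
    (hA : ContinuousOn A (Set.Ico 0 t₀)) (hΦ : ContinuousOn Φ (Set.Ico 0 t₀))
    (hAskew : ∀ t ∈ Set.Ico (0 : ℝ) t₀, (A t)ᴴ = -A t)
    (hΦskew : ∀ t ∈ Set.Ico (0 : ℝ) t₀, (Φ t)ᴴ = -Φ t)
    (hΦbound : ∀ t ∈ Set.Ico (0 : ℝ) t₀, opNorm' (Φ t) ≤ c / (t₀ - t))
    (hg : ∀ t ∈ Set.Ico (0 : ℝ) t₀,
      HasDerivWithinAt g ((-A t + Complex.I • Φ t) * g t) (Set.Ico 0 t₀) t) :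
    ∀ t ∈ Set.Ico (0 : ℝ) t₀,
      frobeniusNorm' (g t) ≤ frobeniusNorm' (g 0) * (t₀ / (t₀ - t)) ^ c := by
  intro t ht
  set s : Set ℝ := Set.Ico (0 : ℝ) t₀ with hs
  set M : ℝ → Matrix (Fin n) (Fin n) ℂ := fun u => -A u + Complex.I • Φ u with hM
  set N : ℝ → ℝ := fun u => (Matrix.trace ((g u)ᴴ * g u)).re with hNdef
  set N' : ℝ → ℝ := fun u => 2 * (Matrix.trace ((g u)ᴴ * (M u * g u))).re with hN'def
  have hN : ∀ u ∈ s, HasDerivWithinAt N (N' u) s u := fun u hu =>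
    hasDerivWithinAt_traceN (hg u hu)
  have hNnonneg : ∀ u, 0 ≤ N u := fun u => traceN_nonneg (g u)
  have hN'le : ∀ u ∈ s, N' u ≤ 2 * (c / (t₀ - u)) * N u := by
    intro u hu
    have hsplit : (Matrix.trace ((g u)ᴴ * (M u * g u))).re
        = (Matrix.trace ((g u)ᴴ * (-A u * g u))).re
          + (Matrix.trace ((g u)ᴴ * ((Complex.I • Φ u) * g u))).re := by
      rw [hM]
      rw [Matrix.add_mul, Matrix.mul_add, Matrix.trace_add, Complex.add_re]
    have h2 : (Matrix.trace ((g u)ᴴ * (-A u * g u))).re = 0 :=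
      trace_skew_re_zero _ _ (by rw [Matrix.conjTranspose_neg, hAskew u hu, neg_neg])
    have h3 : (Matrix.trace ((g u)ᴴ * ((Complex.I • Φ u) * g u))).re
        ≤ opNorm' (Complex.I • Φ u) * N u := trace_bound _ _
    have h4 : opNorm' (Complex.I • Φ u) = opNorm' (Φ u) := by
      have hsm : Matrix.toEuclideanCLM (𝕜 := ℂ) (Complex.I • Φ u)
          = Complex.I • Matrix.toEuclideanCLM (𝕜 := ℂ) (Φ u) := map_smul _ _ _
      unfold opNorm'
      rw [hsm]
      have hns := norm_smul Complex.I (Matrix.toEuclideanCLM (𝕜 := ℂ) (Φ u))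
      rw [hns, Complex.norm_I, one_mul]
    have h5 : opNorm' (Φ u) * N u ≤ (c / (t₀ - u)) * N u :=
      mul_le_mul_of_nonneg_right (hΦbound u hu) (hNnonneg u)
    rw [hN'def]
    simp only
    rw [hsplit, h2, zero_add]
    rw [h4] at h3
    nlinarith [hNnonneg u]
  set ψ : ℝ → ℝ := fun u => N u * (t₀ - u) ^ (2 * c) with hψdef
  have hconvex : Convex ℝ s := convex_Ico _ _
  have hint : interior s = Set.Ioo (0 : ℝ) t₀ := by rw [hs, interior_Ico]
  have hψcont : ContinuousOn ψ s := by
    apply ContinuousOn.mul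
    · exact fun u hu => (hN u hu).continuousWithinAt
    · exact ((continuous_const.sub continuous_id).continuousOn).rpow_const
        (fun x _ => Or.inr (by positivity))
  set f' : ℝ → ℝ := fun u =>
    N' u * (t₀ - u) ^ (2 * c) + N u * (2 * c * (t₀ - u) ^ (2 * c - 1) * (-1)) with hf'def
  have hψderiv : ∀ x ∈ interior s, HasDerivWithinAt ψ (f' x) (interior s) x := by
    intro x hx
    rw [hint] at hx
    have hxs : x ∈ s := ⟨le_of_lt hx.1, hx.2⟩
    have hmem : s ∈ nhds x := Ico_mem_nhds hx.1 hx.2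
    have hNx : HasDerivAt N (N' x) x := (hN x hxs).hasDerivAt hmem
    have hb : HasDerivAt (fun u : ℝ => t₀ - u) (-1) x := by
      simpa using (hasDerivAt_id x).const_sub t₀
    have hpos : (0 : ℝ) < t₀ - x := sub_pos.2 hx.2
    have hrpow : HasDerivAt (fun u => (t₀ - u) ^ (2 * c))
        (2 * c * (t₀ - x) ^ (2 * c - 1) * (-1)) x :=
      (Real.hasDerivAt_rpow_const (Or.inl (ne_of_gt hpos))).comp x hb
    exact ((hNx.mul hrpow).hasDerivWithinAt)
  have hψnonpos : ∀ x ∈ interior s, f' x ≤ 0 := by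
    intro x hx
    rw [hint] at hx
    have hxs : x ∈ s := ⟨le_of_lt hx.1, hx.2⟩
    have hpos : (0 : ℝ) < t₀ - x := sub_pos.2 hx.2
    have hPQ : (t₀ - x) ^ (2 * c) = (t₀ - x) ^ (2 * c - 1) * (t₀ - x) := by
      rw [← Real.rpow_add_one (ne_of_gt hpos)]
      ring_nf
    have hQ : (0 : ℝ) ≤ (t₀ - x) ^ (2 * c - 1) := Real.rpow_nonneg (le_of_lt hpos) _
    have hP : (0 : ℝ) ≤ (t₀ - x) ^ (2 * c) := Real.rpow_nonneg (le_of_lt hpos) _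
    have h1 := hN'le x hxs
    have h2 : N' x * (t₀ - x) ^ (2 * c) ≤ 2 * (c / (t₀ - x)) * N x * (t₀ - x) ^ (2 * c) :=
      mul_le_mul_of_nonneg_right h1 hP
    have h3 : 2 * (c / (t₀ - x)) * N x * (t₀ - x) ^ (2 * c)
        = 2 * c * N x * (t₀ - x) ^ (2 * c - 1) := by
      rw [hPQ]
      field_simp
    rw [hf'def]
    simp only
    nlinarith [hNnonneg x]
  have hanti : AntitoneOn ψ s :=
    antitoneOn_of_hasDerivWithinAt_nonpos hconvex hψcont hψderiv hψnonpos
  have h0s : (0 : ℝ) ∈ s := ⟨le_refl _, ht₀⟩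
  have hkey : ψ t ≤ ψ 0 := hanti h0s ht ht.1
  have hpos : (0 : ℝ) < t₀ - t := sub_pos.2 ht.2
  have hbase : (0 : ℝ) ≤ t₀ / (t₀ - t) := div_nonneg (le_of_lt ht₀) (le_of_lt hpos)
  set r : ℝ := (t₀ / (t₀ - t)) ^ c with hrdef
  have hr : 0 ≤ r := Real.rpow_nonneg hbase _
  have hNt : N t ≤ N 0 * r ^ 2 := by
    have hP0 : (0 : ℝ) < (t₀ - t) ^ (2 * c) := Real.rpow_pos_of_pos hpos _
    have hψt : N t * (t₀ - t) ^ (2 * c) ≤ N 0 * t₀ ^ (2 * c) := by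
      have := hkey
      rw [hψdef] at this
      simpa using this
    have hr2 : r ^ 2 = t₀ ^ (2 * c) / (t₀ - t) ^ (2 * c) := by
      rw [hrdef, ← Real.div_rpow (le_of_lt ht₀) (le_of_lt hpos), mul_comm,
        Real.rpow_mul hbase, Real.rpow_two]
    calc N t = N t * (t₀ - t) ^ (2 * c) / (t₀ - t) ^ (2 * c) := by field_simp
      _ ≤ N 0 * t₀ ^ (2 * c) / (t₀ - t) ^ (2 * c) := by gcongr
      _ = N 0 * (t₀ ^ (2 * c) / (t₀ - t) ^ (2 * c)) := by ring
      _ = N 0 * r ^ 2 := by rw [hr2]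
  have hfro : ∀ u : ℝ, frobeniusNorm' (g u) = Real.sqrt (N u) := by
    intro u
    rw [frobeniusNorm', Matrix.trace_mul_comm]
  rw [hfro, hfro]
  calc Real.sqrt (N t) ≤ Real.sqrt (N 0 * r ^ 2) := Real.sqrt_le_sqrt hNt
    _ = Real.sqrt (N 0) * r := by rw [Real.sqrt_mul (hNnonneg 0), Real.sqrt_sq hr]
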